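/- For the 4-node graph G with edges (1,2), (1,3), (1,4), (2,3), (2,4) (directed respecting the ordering), and agents choosing greedily where agent i observes its in-neighbors, the greedy solution satisfies f(x^opt) ≤ 2 f(x^sol) for every normalized monotone submodular f and action sets X_1,...,X_4; hence γ(G) = 1/2. -/

import Mathlib

open Finset

/-- The 4-node graph with edges (1,2), (1,3), (1,4), (2,3), (2,4)
(0-indexed: all pairs i < j except (2,3)). -/
def E4 (i j : Fin 4) : Prop := i < j ∧ ¬ (i.val = 2 ∧ j.val = 3)

instance : DecidableRel E4 := fun i j => by unfold E4; infer_instance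

/-- Set-level submodularity derived from element-level submodularity. -/
lemma set_submod {α : Type*} [DecidableEq α] (f : Finset α → ℝ)
    (hmono : ∀ A B : Finset α, A ⊆ B → f A ≤ f B)
    (hsub : ∀ A B : Finset α, A ⊆ B → ∀ x ∉ B,
      f (insert x B) - f B ≤ f (insert x A) - f A)
    (T : Finset α) : ∀ A B : Finset α, A ⊆ B →
      f (T ∪ B) - f B ≤ f (T ∪ A) - f A := by
  induction T using Finset.induction_on with
  | empty => intro A B _; simp
  | insert x T hx ih =>
    intro A B hAB
    have h1 : f (insert x (T ∪ B)) - f (T ∪ B) ≤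
        f (insert x (T ∪ A)) - f (T ∪ A) := by
      by_cases hxB : x ∈ T ∪ B
      · have : insert x (T ∪ B) = T ∪ B := Finset.insert_eq_self.2 hxB
        rw [this]
        have := hmono (T ∪ A) (insert x (T ∪ A)) (Finset.subset_insert _ _)
        linarith
      · exact hsub (T ∪ A) (T ∪ B)
          (Finset.union_subset_union_right hAB) x hxB
    have h2 := ih A B hAB
    have e1 : insert x T ∪ B = insert x (T ∪ B) := Finset.insert_union _ _ _
    have e2 : insert x T ∪ A = insert x (T ∪ A) := Finset.insert_union _ _ _
    rw [e1, e2]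
    linarith

/-- for the 4-node graph with edges (1,2),(1,3),(1,4),(2,3),(2,4),
the generalized distributed greedy solution satisfies `f(x^opt) ≤ 2 f(x^sol)`
for every normalized monotone submodular `f` and action sets `X`. -/
theorem four_node_graph_half_bound {α : Type*} [DecidableEq α]
    (f : Finset α → ℝ)
    (hnorm : f ∅ = 0)
    (hmono : ∀ A B : Finset α, A ⊆ B → f A ≤ f B)
    (hsub : ∀ A B : Finset α, A ⊆ B → ∀ x ∉ B,
      f (insert x B) - f B ≤ f (insert x A) - f A)
    (X : Fin 4 → Finset (Finset α))
    (sol opt : Fin 4 → Finset α)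
    (hsolX : ∀ i, sol i ∈ X i)
    (hgreedy : ∀ i : Fin 4, ∀ y ∈ X i,
      f (y ∪ (univ.filter (fun j => E4 j i)).biUnion sol) ≤
        f (sol i ∪ (univ.filter (fun j => E4 j i)).biUnion sol))
    (hoptX : ∀ i, opt i ∈ X i)
    (hopt : ∀ y : Fin 4 → Finset α, (∀ i, y i ∈ X i) →
      f (univ.biUnion y) ≤ f (univ.biUnion opt)) :
    f (univ.biUnion opt) ≤ 2 * f (univ.biUnion sol) := by
  -- abbreviations
  set a := sol 0 with ha
  set b := sol 1 with hb
  set c := sol 2 with hc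
  set d := sol 3 with hd
  set A := opt 0 with hA
  set B := opt 1 with hB
  set C := opt 2 with hC
  set D := opt 3 with hD
  -- neighborhood computations
  have e0 : (univ.filter (fun j => E4 j (0 : Fin 4))) = ∅ := by decide
  have e1 : (univ.filter (fun j => E4 j (1 : Fin 4))) = {0} := by decide
  have e2 : (univ.filter (fun j => E4 j (2 : Fin 4))) = {0, 1} := by decide
  have e3 : (univ.filter (fun j => E4 j (3 : Fin 4))) = {0, 1} := by decide
  have b01 : ({0, 1} : Finset (Fin 4)).biUnion sol = a ∪ b := by
    rw [show ({0,1} : Finset (Fin 4)) = insert 0 {1} from rfl,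
      Finset.biUnion_insert, Finset.singleton_biUnion]
  -- greedy conditions specialized
  have g0 : f A ≤ f a := by
    have := hgreedy 0 A (hoptX 0)
    rw [e0] at this; simpa using this
  have g1 : f (B ∪ a) ≤ f (b ∪ a) := by
    have := hgreedy 1 B (hoptX 1)
    rw [e1, Finset.singleton_biUnion] at this; exact this
  have g2 : f (C ∪ (a ∪ b)) ≤ f (c ∪ (a ∪ b)) := by
    have := hgreedy 2 C (hoptX 2)
    rw [e2, b01] at this; exact this
  have g3 : f (D ∪ (a ∪ b)) ≤ f (d ∪ (a ∪ b)) := by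
    have := hgreedy 3 D (hoptX 3)
    rw [e3, b01] at this; exact this
  -- unions over univ
  have huniv : (univ : Finset (Fin 4)) = {0, 1, 2, 3} := by decide
  have hS : univ.biUnion sol = a ∪ (b ∪ (c ∪ d)) := by
    rw [huniv]
    simp [Finset.biUnion_insert, Finset.singleton_biUnion, Finset.union_assoc]
    rfl
  have hO : univ.biUnion opt = A ∪ (B ∪ (C ∪ D)) := by
    rw [huniv]
    simp [Finset.biUnion_insert, Finset.singleton_biUnion, Finset.union_assoc]
    rfl
  rw [hS, hO]
  set s2 := a ∪ b with hs2
  -- marginal bounds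
  have m0 : f (A ∪ s2) - f s2 ≤ f A - f ∅ := by
    have := set_submod f hmono hsub A ∅ s2 (Finset.empty_subset _)
    simpa using this
  have m1 : f (B ∪ (A ∪ s2)) - f (A ∪ s2) ≤ f (B ∪ a) - f a := by
    refine set_submod f hmono hsub B a (A ∪ s2) ?_
    intro x hx
    simp [hs2]
    tauto
  have m2 : f (C ∪ (B ∪ (A ∪ s2))) - f (B ∪ (A ∪ s2)) ≤ f (C ∪ s2) - f s2 := by
    refine set_submod f hmono hsub C s2 (B ∪ (A ∪ s2)) ?_
    intro x hx
    simp
    tauto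
  have m3 : f (D ∪ (C ∪ (B ∪ (A ∪ s2)))) - f (C ∪ (B ∪ (A ∪ s2))) ≤
      f (D ∪ s2) - f s2 := by
    refine set_submod f hmono hsub D s2 (C ∪ (B ∪ (A ∪ s2))) ?_
    intro x hx
    simp
    tauto
  -- monotonicity bounds
  have mo1 : f (A ∪ (B ∪ (C ∪ D))) ≤ f (D ∪ (C ∪ (B ∪ (A ∪ s2)))) := by
    refine hmono _ _ ?_
    intro x hx
    simp at hx ⊢
    tauto
  have mo2 : f (c ∪ s2) ≤ f (a ∪ (b ∪ (c ∪ d))) := by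
    refine hmono _ _ ?_
    intro x hx
    simp [hs2] at hx ⊢
    tauto
  have mo3 : f (d ∪ s2) ≤ f (a ∪ (b ∪ (c ∪ d))) := by
    refine hmono _ _ ?_
    intro x hx
    simp [hs2] at hx ⊢
    tauto
  have hcomm : f (b ∪ a) = f (a ∪ b) := by rw [Finset.union_comm]
  have hc2 : f (c ∪ (a ∪ b)) = f (c ∪ s2) := by rw [hs2]
  have hd2 : f (d ∪ (a ∪ b)) = f (d ∪ s2) := by rw [hs2]
  -- combine everything
  linarith [g0, g1, g2, g3, m0, m1, m2, m3, mo1, mo2, mo3]
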